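/- For integers p ≥ q ≥ 1, the polynomial P_p^q − P_q^p lies in S; equivalently, (P_p^q − P_q^p)(x₁²,…,xₙ²) is a sum of squares of polynomials (power mean inequality as a sum of squares). -/

import Mathlib

open Finset MvPolynomial

/-- The normalized `m`-th power sum `P_m = (1/n) Σ_j x_j^m`. -/
noncomputable def psum (n : ℕ) (m : ℕ) : MvPolynomial (Fin n) ℝ :=
  ((n : ℝ))⁻¹ • ∑ j, X j ^ m

namespace PowerMeanSOS

variable {R : Type*} [CommRing R]

theorem isSumSq_mul_self' (a : R) : IsSumSq (a * a) := by
  simpa using IsSumSq.sq_add a 0 IsSumSq.zero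

theorem isSumSq_mul {a b : R} (ha : IsSumSq a) (hb : IsSumSq b) : IsSumSq (a * b) := by
  induction ha with
  | zero => simpa using IsSumSq.zero
  | @sq_add x S _ ih =>
    rw [add_mul]
    refine IsSumSq.add ?_ ih
    clear ih
    induction hb with
    | zero => simpa using IsSumSq.zero
    | @sq_add y T _ ih2 =>
      have : x * x * (y * y + T) = (x * y) * (x * y) + x * x * T := by ring
      rw [this]
      exact IsSumSq.add (isSumSq_mul_self' _) ih2

variable (n : ℕ)

noncomputable abbrev φ : MvPolynomial (Fin n) ℝ →ₐ[ℝ] MvPolynomial (Fin n) ℝ :=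
  bind₁ (fun j : Fin n => (X j : MvPolynomial (Fin n) ℝ) ^ 2)

/-- `f` is in the semiring `S`: `f(x²)` is a sum of squares. -/
def InS (f : MvPolynomial (Fin n) ℝ) : Prop := IsSumSq (φ n f)

variable {n}

theorem InS.add {f g} (hf : InS n f) (hg : InS n g) : InS n (f + g) := by
  unfold InS at *; rw [map_add]; exact IsSumSq.add hf hg

theorem InS.mul {f g} (hf : InS n f) (hg : InS n g) : InS n (f * g) := by
  unfold InS at *; rw [map_mul]; exact isSumSq_mul hf hg

theorem InS.zero : InS n 0 := by unfold InS; rw [map_zero]; exact IsSumSq.zero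

theorem InS.one : InS n 1 := by
  unfold InS; rw [map_one]; simpa using isSumSq_mul_self' (1 : MvPolynomial (Fin n) ℝ)

theorem InS.pow {f} (hf : InS n f) (k : ℕ) : InS n (f ^ k) := by
  induction k with
  | zero => simpa [pow_zero] using InS.one
  | succ k ih => rw [pow_succ]; exact ih.mul hf

theorem InS.smul {c : ℝ} (hc : 0 ≤ c) {f} (hf : InS n f) : InS n (c • f) := by
  unfold InS at *
  rw [map_smul, MvPolynomial.smul_eq_C_mul, ← Real.mul_self_sqrt hc, map_mul]
  exact isSumSq_mul (isSumSq_mul_self' (C (Real.sqrt c))) hf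

/-- Key pairwise (Chebyshev-type) lemma. -/
theorem lemA (q r : ℕ) :
    InS n (_root_.psum n (q + r + 1) * _root_.psum n q - _root_.psum n (q + r) * _root_.psum n (q + 1)) := by
  set Sm : ℕ → MvPolynomial (Fin n) ℝ := fun m => ∑ j, X j ^ m with hSm
  have hps : ∀ m, _root_.psum n m = ((n : ℝ))⁻¹ • Sm m := fun m => rfl
  have hmul : ∀ a b, _root_.psum n a * _root_.psum n b = (((n:ℝ))⁻¹ * ((n:ℝ))⁻¹) • (Sm a * Sm b) := by
    intro a b; rw [hps, hps, smul_mul_smul_comm]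
  rw [hmul, hmul, ← smul_sub]
  refine InS.smul (by positivity) ?_
  set g : Fin n → Fin n → MvPolynomial (Fin n) ℝ :=
    fun i j => X i ^ (q + r + 1) * X j ^ q - X i ^ (q + r) * X j ^ (q + 1) with hg
  set h : Fin n → Fin n → MvPolynomial (Fin n) ℝ :=
    fun i j => X i ^ q * X j ^ q * (X i ^ r - X j ^ r) * (X i - X j) with hh
  have hgsum : ∑ i, ∑ j, g i j
      = Sm (q + r + 1) * Sm q - Sm (q + r) * Sm (q + 1) := by
    rw [hSm]
    rw [Finset.sum_mul_sum, Finset.sum_mul_sum, ← Finset.sum_sub_distrib]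
    refine Finset.sum_congr rfl fun i _ => ?_
    rw [← Finset.sum_sub_distrib]
  have key : ∑ i, ∑ j, h i j
      = (2 : ℝ) • (Sm (q + r + 1) * Sm q - Sm (q + r) * Sm (q + 1)) := by
    have h1 : ∀ i j : Fin n, h i j = g i j + g j i := by
      intro i j; rw [hg, hh]; ring
    calc ∑ i, ∑ j, h i j = ∑ i, ∑ j, (g i j + g j i) := by
          exact Finset.sum_congr rfl fun i _ => Finset.sum_congr rfl fun j _ => h1 i j
      _ = (∑ i, ∑ j, g i j) + ∑ i, ∑ j, g j i := by
          rw [← Finset.sum_add_distrib]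
          exact Finset.sum_congr rfl fun i _ => Finset.sum_add_distrib
      _ = (∑ i, ∑ j, g i j) + ∑ i, ∑ j, g i j := by rw [Finset.sum_comm]
      _ = (2:ℝ) • (Sm (q + r + 1) * Sm q - Sm (q + r) * Sm (q + 1)) := by
          rw [hgsum, two_smul]
  have : Sm (q + r + 1) * Sm q - Sm (q + r) * Sm (q + 1)
      = (2 : ℝ)⁻¹ • (∑ i, ∑ j, h i j) := by
    rw [key, smul_smul]; norm_num
  rw [this]
  refine InS.smul (by norm_num) ?_
  -- each h i j is in S
  have hInS : ∀ i j : Fin n, InS n (h i j) := by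
    intro i j
    unfold InS
    have hφ : (φ n) (h i j)
        = (X i ^ 2 : MvPolynomial (Fin n) ℝ) ^ q * (X j ^ 2) ^ q
          * ((X i ^ 2) ^ r - (X j ^ 2) ^ r) * (X i ^ 2 - X j ^ 2) := by
      simp only [hh, map_mul, map_sub, map_pow, bind₁_X_right]
    rw [hφ, ← geom_sum₂_mul (X i ^ 2 : MvPolynomial (Fin n) ℝ) (X j ^ 2) r]
    have expand :
        (X i ^ 2 : MvPolynomial (Fin n) ℝ) ^ q * (X j ^ 2) ^ q
          * ((∑ k ∈ Finset.range r, (X i ^ 2) ^ k * (X j ^ 2) ^ (r - 1 - k)) * (X i ^ 2 - X j ^ 2))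
          * (X i ^ 2 - X j ^ 2)
        = ∑ k ∈ Finset.range r,
            (X i ^ q * X j ^ q * X i ^ k * X j ^ (r - 1 - k) * (X i ^ 2 - X j ^ 2))
            * (X i ^ q * X j ^ q * X i ^ k * X j ^ (r - 1 - k) * (X i ^ 2 - X j ^ 2)) := by
      rw [Finset.sum_mul, Finset.mul_sum, Finset.sum_mul]
      refine Finset.sum_congr rfl fun k _ => ?_
      ring
    rw [expand]
    exact IsSumSq.sum_mul_self _ _
  -- sum of InS terms
  have : ∀ (s : Finset (Fin n)) (f : Fin n → MvPolynomial (Fin n) ℝ),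
      (∀ i ∈ s, InS n (f i)) → InS n (∑ i ∈ s, f i) := by
    intro s f hf
    induction s using Finset.cons_induction with
    | empty => simpa using InS.zero
    | cons a s ha ih =>
      rw [Finset.sum_cons]
      exact (hf a (Finset.mem_cons_self a s)).add
        (ih fun i hi => hf i (Finset.mem_cons_of_mem hi))
  exact this _ _ fun i _ => this _ _ fun j _ => hInS i j

theorem InS_sum {s : Finset (Fin n)} {f : Fin n → MvPolynomial (Fin n) ℝ}
    (hf : ∀ i ∈ s, InS n (f i)) : InS n (∑ i ∈ s, f i) := by
  induction s using Finset.cons_induction with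
  | empty => simpa using InS.zero
  | cons a s ha ih =>
    rw [Finset.sum_cons]
    exact (hf a (Finset.mem_cons_self a s)).add (ih fun i hi => hf i (Finset.mem_cons_of_mem hi))

theorem InS_psum (m : ℕ) : InS n (_root_.psum n m) := by
  unfold _root_.psum
  refine InS.smul (by positivity) (InS_sum fun i _ => ?_)
  unfold InS
  rw [map_pow, bind₁_X_right]
  have : ((X i : MvPolynomial (Fin n) ℝ) ^ 2) ^ m = X i ^ m * X i ^ m := by ring
  rw [this]
  exact isSumSq_mul_self' _

theorem psum_zero (hn : n ≠ 0) : _root_.psum n 0 = 1 := by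
  unfold _root_.psum
  simp only [pow_zero, Finset.sum_const, Finset.card_univ, Fintype.card_fin, nsmul_eq_mul,
    mul_one]
  rw [show ((n : ℕ) : MvPolynomial (Fin n) ℝ) = C ((n : ℕ) : ℝ) by simp]
  rw [MvPolynomial.smul_eq_C_mul, ← map_mul, inv_mul_cancel₀ (Nat.cast_ne_zero.2 hn), map_one]

/-- Lemma B: `P_{p+1}^q - P_p^q P_q ∈ S` for `q ≤ p`. -/
theorem lemB (hn : n ≠ 0) (p q : ℕ) (hqp : q ≤ p) :
    InS n (_root_.psum n (p + 1) ^ q - _root_.psum n p ^ q * _root_.psum n q) := by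
  induction q with
  | zero =>
    simpa [psum_zero hn] using InS.zero (n := n)
  | succ q ih =>
    have hq : q ≤ p := le_trans (Nat.le_succ q) hqp
    have hA : InS n (_root_.psum n (p + 1) * _root_.psum n q - _root_.psum n p * _root_.psum n (q + 1)) := by
      obtain ⟨r, hr⟩ := Nat.exists_eq_add_of_le hq
      subst hr
      exact lemA q r
    have : _root_.psum n (p + 1) ^ (q + 1) - _root_.psum n p ^ (q + 1) * _root_.psum n (q + 1)
        = _root_.psum n (p + 1) * (_root_.psum n (p + 1) ^ q - _root_.psum n p ^ q * _root_.psum n q)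
          + _root_.psum n p ^ q * (_root_.psum n (p + 1) * _root_.psum n q - _root_.psum n p * _root_.psum n (q + 1)) := by
      ring
    rw [this]
    exact ((InS_psum (p + 1)).mul (ih hq)).add (((InS_psum p).pow q).mul hA)

/-- Main lemma: `P_p^q - P_q^p ∈ S` for `q ≤ p`. -/
theorem lemC (hn : n ≠ 0) (p q : ℕ) (hqp : q ≤ p) :
    InS n (_root_.psum n p ^ q - _root_.psum n q ^ p) := by
  obtain ⟨r, hr⟩ := Nat.exists_eq_add_of_le hqp
  subst hr
  induction r with
  | zero => simpa using InS.zero (n := n)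
  | succ r ih =>
    have : _root_.psum n (q + (r + 1)) ^ q - _root_.psum n q ^ (q + (r + 1))
        = (_root_.psum n ((q + r) + 1) ^ q - _root_.psum n (q + r) ^ q * _root_.psum n q)
          + _root_.psum n q * (_root_.psum n (q + r) ^ q - _root_.psum n q ^ (q + r)) := by
      rw [show q + (r + 1) = (q + r) + 1 from rfl]; ring
    rw [this]
    exact (lemB hn (q + r) q (Nat.le_add_right q r)).add ((InS_psum q).mul (ih (Nat.le_add_right q r)))

end PowerMeanSOS

theorem power_mean_sos (n p q : ℕ) (hq : 1 ≤ q) (hpq : q ≤ p) :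
    IsSumSq (bind₁ (fun j : Fin n => (X j : MvPolynomial (Fin n) ℝ) ^ 2)
      (psum n p ^ q - psum n q ^ p)) := by
  rcases Nat.eq_zero_or_pos n with hn | hn
  · subst hn
    have hz : ∀ m, _root_.psum 0 m = 0 := by
      intro m; unfold _root_.psum; simp
    rw [hz, hz, zero_pow (by omega), zero_pow (by omega), sub_zero, map_zero]
    exact IsSumSq.zero
  · exact PowerMeanSOS.lemC (Nat.pos_iff_ne_zero.mp hn) p q hpq
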